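/- Let S be a finite set, γ ∈ [0,1), and for each s ∈ S let Δ(s) be the probability simplex over a finite action set A_s and C_s a nonempty set of probability distributions over pairs (p_s, r_s), where p_s assigns to each action a probability vector over S and r_s a reward vector. Define the operator L on ℝ^S by (L v)(s) = max over π_s ∈ Δ(s) of min over μ_s ∈ C_s of E_{(p_s,r_s)∼μ_s}[ Σ_a π_s(a)( r_s(a) + γ Σ_{s'} p_s(s'|a) v(s') ) ]. Then L is a γ-contraction with respect to the supremum norm: ‖L v₁ − L v₂‖_∞ ≤ γ ‖v₁ − v₂‖_∞ for all v₁, v₂ ∈ ℝ^S, provided the max and min are attained. -/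
import Mathlib


open MeasureTheory

/-- Expected one-step value at state `s`: `E_{(p,r)∼μ}[ Σ_a π(a) (r(a) + γ Σ_{s'} p(s'|a) v(s')) ]`. -/
noncomputable def expVal {S : Type} [Fintype S] {A : Type} [Fintype A]
    (γ : ℝ) (v : S → ℝ) (π : A → ℝ)
    (μ : Measure ((A → S → ℝ) × (A → ℝ))) : ℝ :=
  ∫ pr, (∑ a, π a * (pr.2 a + γ * ∑ s', pr.1 a s' * v s')) ∂μ

/-- If `f` and `g` are pointwise within `c` of each other, the infima are within `c`. -/
lemma ciInf_le_ciInf_add_of_abs_sub_le {ι : Type*} [Nonempty ι] {f g : ι → ℝ} {c : ℝ}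
    (hc : 0 ≤ c) (h : ∀ i, |f i - g i| ≤ c) : (⨅ i, f i) ≤ (⨅ i, g i) + c := by
  by_cases hb : BddBelow (Set.range f)
  · have h1 : (⨅ i, f i) - c ≤ ⨅ i, g i := by
      apply le_ciInf
      intro i
      have h2 : (⨅ i, f i) ≤ f i := ciInf_le hb i
      have h3 := abs_le.mp (h i)
      linarith [h3.1]
    linarith
  · have hb' : ¬ BddBelow (Set.range g) := by
      rintro ⟨m, hm⟩
      exact hb ⟨m - c, by
        rintro x ⟨i, rfl⟩
        have h3 := abs_le.mp (h i)
        have : m ≤ g i := hm ⟨i, rfl⟩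
        linarith [h3.2]⟩
    rw [Real.iInf_of_not_bddBelow hb, Real.iInf_of_not_bddBelow hb']
    linarith

/-- If `f` and `g` are pointwise within `c` of each other, the suprema are within `c`. -/
lemma ciSup_le_ciSup_add_of_abs_sub_le {ι : Type*} [Nonempty ι] {f g : ι → ℝ} {c : ℝ}
    (hc : 0 ≤ c) (h : ∀ i, |f i - g i| ≤ c) : (⨆ i, f i) ≤ (⨆ i, g i) + c := by
  by_cases hb : BddAbove (Set.range g)
  · apply ciSup_le
    intro i
    have h2 : g i ≤ ⨆ i, g i := le_ciSup hb i
    have h3 := abs_le.mp (h i)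
    linarith [h3.2]
  · have hb' : ¬ BddAbove (Set.range f) := by
      rintro ⟨m, hm⟩
      exact hb ⟨m + c, by
        rintro x ⟨i, rfl⟩
        have h3 := abs_le.mp (h i)
        have : f i ≤ m := hm ⟨i, rfl⟩
        linarith [h3.1]⟩
    rw [Real.iSup_of_not_bddAbove hb, Real.iSup_of_not_bddAbove hb']
    linarith

/-- Core analytic estimate: for a probability measure supported on transition kernels
(a.e. each `pr.1 a` lies in the simplex), with the identity integrable, the expected
values under `v₁` and `v₂` differ by at most `γ * ‖v₁ - v₂‖`. -/
lemma abs_expVal_sub_expVal_le {S : Type} [Fintype S] {A : Type} [Fintype A]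
    (γ : ℝ) (hγ0 : 0 ≤ γ) (v₁ v₂ : S → ℝ) (π : A → ℝ) (hπ : π ∈ stdSimplex ℝ A)
    (μ : Measure ((A → S → ℝ) × (A → ℝ))) (hprob : IsProbabilityMeasure μ)
    (hsimp : ∀ᵐ pr ∂μ, ∀ a, pr.1 a ∈ stdSimplex ℝ S)
    (hint : Integrable (fun pr : (A → S → ℝ) × (A → ℝ) => pr) μ) :
    |expVal γ v₁ π μ - expVal γ v₂ π μ| ≤ γ * ‖v₁ - v₂‖ := by
  set K : ℝ := ‖v₁ - v₂‖ with hK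
  have hK0 : 0 ≤ K := norm_nonneg _
  -- integrability of coordinate evaluations
  have hev2 : ∀ a : A, Integrable (fun pr : (A → S → ℝ) × (A → ℝ) => pr.2 a) μ := by
    intro a
    have := ((ContinuousLinearMap.proj (R := ℝ) (φ := fun _ : A => ℝ) a).comp
      (ContinuousLinearMap.snd ℝ (A → S → ℝ) (A → ℝ))).integrable_comp hint
    simpa using this
  have hev1 : ∀ (a : A) (s' : S),
      Integrable (fun pr : (A → S → ℝ) × (A → ℝ) => pr.1 a s') μ := by
    intro a s'
    have := (((ContinuousLinearMap.proj (R := ℝ) (φ := fun _ : S => ℝ) s').comp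
      (ContinuousLinearMap.proj (R := ℝ) (φ := fun _ : A => S → ℝ) a)).comp
      (ContinuousLinearMap.fst ℝ (A → S → ℝ) (A → ℝ))).integrable_comp hint
    simpa using this
  have hf : ∀ v : S → ℝ, Integrable
      (fun pr : (A → S → ℝ) × (A → ℝ) =>
        ∑ a, π a * (pr.2 a + γ * ∑ s', pr.1 a s' * v s')) μ := by
    intro v
    apply integrable_finset_sum
    intro a _
    exact (((hev2 a).add
      ((integrable_finset_sum _ (fun s' _ => (hev1 a s').mul_const (v s'))).const_mul γ))).const_mul (π a)
  have hsub : expVal γ v₁ π μ - expVal γ v₂ π μ =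
      ∫ pr, ((∑ a, π a * (pr.2 a + γ * ∑ s', pr.1 a s' * v₁ s'))
        - (∑ a, π a * (pr.2 a + γ * ∑ s', pr.1 a s' * v₂ s'))) ∂μ := by
    rw [integral_sub (hf v₁) (hf v₂)]; rfl
  rw [hsub]
  have hbound : ∀ᵐ pr ∂μ,
      ‖(∑ a, π a * (pr.2 a + γ * ∑ s', pr.1 a s' * v₁ s'))
        - (∑ a, π a * (pr.2 a + γ * ∑ s', pr.1 a s' * v₂ s'))‖ ≤ γ * K := by
    filter_upwards [hsimp] with pr hpr
    have hd : ∀ s' : S, |v₁ s' - v₂ s'| ≤ K := by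
      intro s'
      have := norm_le_pi_norm (v₁ - v₂) s'
      simpa [Real.norm_eq_abs] using this
    have hrw : (∑ a, π a * (pr.2 a + γ * ∑ s', pr.1 a s' * v₁ s'))
        - (∑ a, π a * (pr.2 a + γ * ∑ s', pr.1 a s' * v₂ s'))
        = ∑ a, γ * (π a * ∑ s', pr.1 a s' * (v₁ s' - v₂ s')) := by
      rw [← Finset.sum_sub_distrib]
      refine Finset.sum_congr rfl (fun a _ => ?_)
      have : (∑ s', pr.1 a s' * (v₁ s' - v₂ s'))
          = (∑ s', pr.1 a s' * v₁ s') - (∑ s', pr.1 a s' * v₂ s') := by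
        rw [← Finset.sum_sub_distrib]
        exact Finset.sum_congr rfl (fun s' _ => mul_sub _ _ _)
      rw [this]; ring
    rw [hrw]
    -- bound each inner sum by K
    have hinner : ∀ a : A, |∑ s', pr.1 a s' * (v₁ s' - v₂ s')| ≤ K := by
      intro a
      calc |∑ s', pr.1 a s' * (v₁ s' - v₂ s')|
          ≤ ∑ s', |pr.1 a s' * (v₁ s' - v₂ s')| := Finset.abs_sum_le_sum_abs _ _
        _ ≤ ∑ s', pr.1 a s' * K := by
            refine Finset.sum_le_sum (fun s' _ => ?_)
            rw [abs_mul, abs_of_nonneg ((hpr a).1 s')]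
            exact mul_le_mul_of_nonneg_left (hd s') ((hpr a).1 s')
        _ = K := by rw [← Finset.sum_mul, (hpr a).2, one_mul]
    calc ‖∑ a, γ * (π a * ∑ s', pr.1 a s' * (v₁ s' - v₂ s'))‖
        ≤ ∑ a, |γ * (π a * ∑ s', pr.1 a s' * (v₁ s' - v₂ s'))| := by
          simpa [Real.norm_eq_abs] using
            Finset.abs_sum_le_sum_abs
              (fun a => γ * (π a * ∑ s', pr.1 a s' * (v₁ s' - v₂ s'))) Finset.univ
      _ ≤ ∑ a, γ * (π a * K) := by
          refine Finset.sum_le_sum (fun a _ => ?_)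
          rw [abs_mul, abs_of_nonneg hγ0, abs_mul, abs_of_nonneg (hπ.1 a)]
          exact mul_le_mul_of_nonneg_left
            (mul_le_mul_of_nonneg_left (hinner a) (hπ.1 a)) hγ0
      _ = γ * K := by rw [← Finset.mul_sum, ← Finset.sum_mul, hπ.2, one_mul]
  have := norm_integral_le_of_norm_le_const (C := γ * K) hbound
  simpa [Real.norm_eq_abs, measure_univ] using this

theorem stmt_4 {S : Type} [Fintype S] {A : S → Type} [∀ s, Fintype (A s)]
    (γ : ℝ) (hγ0 : 0 ≤ γ) (hγ1 : γ < 1)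
    (Cs : ∀ s : S, Set (Measure ((A s → S → ℝ) × (A s → ℝ))))
    (hCne : ∀ s, (Cs s).Nonempty)
    (hCprob : ∀ s, ∀ μ ∈ Cs s, IsProbabilityMeasure μ ∧
        (∀ᵐ pr ∂μ, ∀ a, pr.1 a ∈ stdSimplex ℝ S) ∧
        Integrable (fun pr : (A s → S → ℝ) × (A s → ℝ) => pr) μ)
    (L : (S → ℝ) → (S → ℝ))
    (hL : ∀ v s, L v s =
        ⨆ π : stdSimplex ℝ (A s), ⨅ μ : Cs s, expVal γ v (π : A s → ℝ) (μ : Measure _))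
    (hmin : ∀ (v : S → ℝ) (s : S) (π : stdSimplex ℝ (A s)), ∃ μ : Cs s,
        (⨅ μ' : Cs s, expVal γ v (π : A s → ℝ) (μ' : Measure _)) =
          expVal γ v (π : A s → ℝ) (μ : Measure _))
    (hmax : ∀ (v : S → ℝ) (s : S), ∃ π : stdSimplex ℝ (A s),
        L v s = ⨅ μ : Cs s, expVal γ v (π : A s → ℝ) (μ : Measure _)) :
    ∀ v₁ v₂ : S → ℝ, ‖L v₁ - L v₂‖ ≤ γ * ‖v₁ - v₂‖ := by
  intro v₁ v₂
  set K : ℝ := ‖v₁ - v₂‖ with hKdef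
  have hK0 : 0 ≤ K := norm_nonneg _
  have hγK : 0 ≤ γ * K := mul_nonneg hγ0 hK0
  -- pointwise bound for each (π, μ)
  have key : ∀ (w₁ w₂ : S → ℝ), ‖w₁ - w₂‖ = K → ∀ (s : S) (π : stdSimplex ℝ (A s)) (μ : Cs s),
      |expVal γ w₁ (π : A s → ℝ) (μ : Measure _) - expVal γ w₂ (π : A s → ℝ) (μ : Measure _)|
        ≤ γ * K := by
    intro w₁ w₂ hw s π μ
    obtain ⟨hprob, hsimp, hint⟩ := hCprob s μ μ.2
    have := abs_expVal_sub_expVal_le γ hγ0 w₁ w₂ (π : A s → ℝ) π.2 μ hprob hsimp hint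
    rwa [hw] at this
  -- one-sided bound per state
  have onesided : ∀ (w₁ w₂ : S → ℝ), ‖w₁ - w₂‖ = K → ∀ s : S, L w₁ s ≤ L w₂ s + γ * K := by
    intro w₁ w₂ hw s
    obtain ⟨π₀, -⟩ := hmax w₁ s
    have : Nonempty (stdSimplex ℝ (A s)) := ⟨π₀⟩
    have : Nonempty (Cs s) := (hCne s).to_subtype
    rw [hL w₁ s, hL w₂ s]
    apply ciSup_le_ciSup_add_of_abs_sub_le hγK
    intro π
    have hw' : ‖w₂ - w₁‖ = K := by
      rw [← hw]; exact norm_sub_rev _ _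
    have h₁ : (⨅ μ : Cs s, expVal γ w₁ (π : A s → ℝ) (μ : Measure _))
        ≤ (⨅ μ : Cs s, expVal γ w₂ (π : A s → ℝ) (μ : Measure _)) + γ * K :=
      ciInf_le_ciInf_add_of_abs_sub_le hγK (fun μ => key w₁ w₂ hw s π μ)
    have h₂ : (⨅ μ : Cs s, expVal γ w₂ (π : A s → ℝ) (μ : Measure _))
        ≤ (⨅ μ : Cs s, expVal γ w₁ (π : A s → ℝ) (μ : Measure _)) + γ * K :=
      ciInf_le_ciInf_add_of_abs_sub_le hγK (fun μ => key w₂ w₁ hw' s π μ)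
    rw [abs_sub_le_iff]
    constructor <;> linarith
  have hw12 : ‖v₁ - v₂‖ = K := rfl
  have hw21 : ‖v₂ - v₁‖ = K := by rw [← hw12]; exact norm_sub_rev _ _

  apply pi_norm_le_iff_of_nonneg hγK |>.mpr
  intro s
  rw [Pi.sub_apply, Real.norm_eq_abs, abs_sub_le_iff]
  exact ⟨by linarith [onesided v₁ v₂ hw12 s], by linarith [onesided v₂ v₁ hw21 s]⟩
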